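/- Under the Yule (Kingman coalescent) distribution on ranked tree shapes with n leaves, the expected value of the (i,j) entry of the F-matrix is E[F_{ij}] = j(j+1)/i, for 1 ≤ j ≤ i ≤ n-1. -/

import Mathlib

open scoped Classical

/-- Collapse the pair of lineage labels `{a, b}`: the larger label is merged
into the smaller one and all larger labels are shifted down by one. -/
def collapse (a b x : ℕ) : ℕ :=
  if x = max a b then min a b else if max a b < x then x - 1 else x

/-- The lineage map of the coalescent after `s` merge events: `chainMap n ω s i`
is the label of the lineage currently containing leaf `i`, where `ω` lists the
pair of lineages merged at each step. -/
def chainMap (n : ℕ) (ω : Fin (n - 1) → Fin n × Fin n) : ℕ → Fin n → ℕ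
  | 0 => fun i => (i : ℕ)
  | s + 1 => fun i =>
      if h : s < n - 1 then
        collapse ((ω ⟨s, h⟩).1 : ℕ) ((ω ⟨s, h⟩).2 : ℕ) (chainMap n ω s i)
      else chainMap n ω s i

/-- `ω` is a valid sequence of coalescent merge choices: at step `s` (when
`n - s` lineages remain) an unordered pair of the `n - s` current lineages is
chosen. -/
def ValidSeq (n : ℕ) (ω : Fin (n - 1) → Fin n × Fin n) : Prop :=
  ∀ s : Fin (n - 1), ((ω s).1 : ℕ) < ((ω s).2 : ℕ) ∧ ((ω s).2 : ℕ) < n - (s : ℕ)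

/-- The sample space of the Yule / Kingman coalescent with `n` leaves: all
sequences of merge choices, each such sequence being equally likely (at every
step a uniformly chosen pair of the extant lineages merges). -/
noncomputable def coalSpace (n : ℕ) : Finset (Fin (n - 1) → Fin n × Fin n) :=
  Finset.univ.filter (ValidSeq n)

/-- The block (set of leaves) of the lineage containing leaf `i` when `k`
lineages remain. -/
noncomputable def blockOf (n : ℕ) (ω : Fin (n - 1) → Fin n × Fin n) (k : ℕ)
    (i : Fin n) : Finset (Fin n) :=
  Finset.univ.filter (fun j => chainMap n ω (n - k) j = chainMap n ω (n - k) i)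

/-- `Zext n ω i k`: leaf `i` is still an external branch (a singleton lineage)
when `k` lineages remain. -/
def Zext (n : ℕ) (ω : Fin (n - 1) → Fin n × Fin n) (i : Fin n) (k : ℕ) : Prop :=
  blockOf n ω k i = {i}

/-- The partition (set of blocks) of the leaves when `k` lineages remain. -/
noncomputable def blocksAt (n : ℕ) (ω : Fin (n - 1) → Fin n × Fin n) (k : ℕ) :
    Finset (Finset (Fin n)) :=
  Finset.univ.image (fun i => blockOf n ω k i)

/-- The F-matrix of the ranked tree shape generated by the coalescent `ω`:
`FmatOf n ω i j` is the number of branches extant when `j + 1` branches are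
present that have not yet bifurcated by the interval with `i + 1` branches,
i.e. the number of common blocks of the partitions into `j + 1` and `i + 1`
lineages. -/
noncomputable def FmatOf (n : ℕ) (ω : Fin (n - 1) → Fin n × Fin n) (i j : ℕ) : ℕ :=
  (blocksAt n ω (j + 1) ∩ blocksAt n ω (i + 1)).card

/-- The D-matrix entry `D i j = F i j - F i (j-1)`: the number of children of
the node creating the `(j+1)`-st branch that have not bifurcated by interval
`i`. -/
noncomputable def DmatOf (n : ℕ) (ω : Fin (n - 1) → Fin n × Fin n) (i j : ℕ) : ℤ :=
  (FmatOf n ω i j : ℤ) - (FmatOf n ω i (j - 1) : ℤ)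

/-- Probability of an event under the Yule / Kingman coalescent with `n`
leaves (uniform measure on merge-choice sequences). -/
noncomputable def coalP (n : ℕ) (A : (Fin (n - 1) → Fin n × Fin n) → Prop) : ℝ :=
  (((coalSpace n).filter A).card : ℝ) / ((coalSpace n).card : ℝ)

/-- Expectation of a random variable under the Yule / Kingman coalescent with
`n` leaves. -/
noncomputable def coalE (n : ℕ) (X : (Fin (n - 1) → Fin n × Fin n) → ℝ) : ℝ :=
  (∑ ω ∈ coalSpace n, X ω) / ((coalSpace n).card : ℝ)


namespace YuleAux

/-! ### collapse lemmas -/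

lemma collapse_of_lt {a b : ℕ} (hab : a < b) (x : ℕ) :
    collapse a b x = if x = b then a else if b < x then x - 1 else x := by
  simp [collapse, max_eq_right hab.le, min_eq_left hab.le]

lemma collapse_lt {a b x m : ℕ} (hab : a < b) (hb : b < m) (hx : x < m) :
    collapse a b x < m - 1 := by
  rw [collapse_of_lt hab]; split_ifs <;> omega

lemma collapse_inj {a b x y : ℕ} (hab : a < b) (hya : y ≠ a) (hyb : y ≠ b)
    (h : collapse a b x = collapse a b y) : x = y := by
  rw [collapse_of_lt hab, collapse_of_lt hab] at h
  split_ifs at h <;> omega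

lemma collapse_surj {a b m y : ℕ} (hab : a < b) (hy : y < m - 1) :
    ∃ x, x < m ∧ collapse a b x = y := by
  rcases lt_or_ge y b with h | h
  · exact ⟨y, by omega, by rw [collapse_of_lt hab]; split_ifs <;> omega⟩
  · exact ⟨y + 1, by omega, by rw [collapse_of_lt hab]; split_ifs <;> omega⟩

lemma collapse_left {a b : ℕ} (hab : a < b) : collapse a b a = a := by
  rw [collapse_of_lt hab]; split_ifs <;> omega

lemma collapse_right {a b : ℕ} (hab : a < b) : collapse a b b = a := by
  rw [collapse_of_lt hab]; split_ifs <;> omega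

/-! ### the two merged labels at step `s` -/

def pr1 (n : ℕ) (ω : Fin (n - 1) → Fin n × Fin n) (s : ℕ) : ℕ :=
  if h : s < n - 1 then ((ω ⟨s, h⟩).1 : ℕ) else 0

def pr2 (n : ℕ) (ω : Fin (n - 1) → Fin n × Fin n) (s : ℕ) : ℕ :=
  if h : s < n - 1 then ((ω ⟨s, h⟩).2 : ℕ) else 1

variable {n : ℕ} {ω ω' : Fin (n - 1) → Fin n × Fin n}

lemma pr_lt (hω : ValidSeq n ω) {s : ℕ} (hs : s < n - 1) :
    pr1 n ω s < pr2 n ω s ∧ pr2 n ω s < n - s := by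
  simpa [pr1, pr2, hs] using hω ⟨s, hs⟩

lemma chainMap_succ {s : ℕ} (hs : s < n - 1) (i : Fin n) :
    chainMap n ω (s + 1) i = collapse (pr1 n ω s) (pr2 n ω s) (chainMap n ω s i) := by
  simp [chainMap, pr1, pr2, hs]

lemma chainMap_lt (hω : ValidSeq n ω) : ∀ {s : ℕ}, s ≤ n - 1 → ∀ i : Fin n,
    chainMap n ω s i < n - s := by
  intro s
  induction s with
  | zero => intro _ i; simpa [chainMap] using i.isLt
  | succ s ih =>
      intro hs i
      have hs' : s < n - 1 := by omega
      rw [chainMap_succ hs']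
      obtain ⟨h1, h2⟩ := pr_lt hω hs'
      have := collapse_lt h1 h2 (ih (by omega) i)
      omega

lemma chainMap_surj (hω : ValidSeq n ω) : ∀ {s : ℕ}, s ≤ n - 1 → ∀ y < n - s,
    ∃ i : Fin n, chainMap n ω s i = y := by
  intro s
  induction s with
  | zero => intro _ y hy; exact ⟨⟨y, by omega⟩, by simp [chainMap]⟩
  | succ s ih =>
      intro hs y hy
      have hs' : s < n - 1 := by omega
      obtain ⟨h1, h2⟩ := pr_lt hω hs'
      obtain ⟨x, hx, hcx⟩ := collapse_surj (m := n - s) (y := y) h1 (by omega)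
      obtain ⟨i, hi⟩ := ih (by omega) x hx
      exact ⟨i, by rw [chainMap_succ hs', hi, hcx]⟩

/-! ### label traces -/

def trc (n : ℕ) (ω : Fin (n - 1) → Fin n × Fin n) (t ℓ : ℕ) : ℕ → ℕ
  | 0 => ℓ
  | r + 1 => collapse (pr1 n ω (t + r)) (pr2 n ω (t + r)) (trc n ω t ℓ r)

lemma chainMap_add {t : ℕ} (i : Fin n) : ∀ {r : ℕ}, t + r ≤ n - 1 →
    chainMap n ω (t + r) i = trc n ω t (chainMap n ω t i) r := by
  intro r
  induction r with
  | zero => intro _; rfl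
  | succ r ih =>
      intro h
      have h' : t + r < n - 1 := by omega
      rw [show t + (r + 1) = (t + r) + 1 by ring, chainMap_succ h', ih (by omega)]
      rfl

lemma trc_lt (hω : ValidSeq n ω) {t ℓ : ℕ} (hℓ : ℓ < n - t) : ∀ {r : ℕ},
    t + r ≤ n - 1 → trc n ω t ℓ r < n - (t + r) := by
  intro r
  induction r with
  | zero => intro _; simpa [trc] using hℓ
  | succ r ih =>
      intro h
      have h' : t + r < n - 1 := by omega
      obtain ⟨h1, h2⟩ := pr_lt hω h'
      have := collapse_lt h1 h2 (ih (by omega))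
      simp only [trc]
      omega

lemma trc_add {t ℓ r : ℕ} : ∀ q : ℕ, trc n ω t ℓ (r + q) = trc n ω (t + r) (trc n ω t ℓ r) q := by
  intro q
  induction q with
  | zero => rfl
  | succ q ih =>
      rw [show r + (q + 1) = (r + q) + 1 by ring]
      simp only [trc, ih, add_assoc]

end YuleAux
namespace YuleAux

variable {n : ℕ} {ω ω' : Fin (n - 1) → Fin n × Fin n}

/-- The label `ℓ` (at step `t`) survives `m` further merge steps untouched. -/
def srv (n : ℕ) (ω : Fin (n - 1) → Fin n × Fin n) (t ℓ m : ℕ) : Prop :=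
  ∀ r < m, trc n ω t ℓ r ≠ pr1 n ω (t + r) ∧ trc n ω t ℓ r ≠ pr2 n ω (t + r)

lemma srv_zero {t ℓ : ℕ} : srv n ω t ℓ 0 := by intro r hr; omega

lemma srv_succ {t ℓ m : ℕ} : srv n ω t ℓ (m + 1) ↔ srv n ω t ℓ m ∧
    (trc n ω t ℓ m ≠ pr1 n ω (t + m) ∧ trc n ω t ℓ m ≠ pr2 n ω (t + m)) := by
  constructor
  · intro h
    exact ⟨fun r hr => h r (by omega), h m (by omega)⟩
  · rintro ⟨h1, h2⟩ r hr
    rcases eq_or_lt_of_le (Nat.lt_succ_iff.mp hr) with h | h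
    · subst h; exact h2
    · exact h1 r h

lemma srv_mono {t ℓ m m' : ℕ} (h : m' ≤ m) (hs : srv n ω t ℓ m) : srv n ω t ℓ m' :=
  fun r hr => hs r (by omega)

/-- The fiber of `chainMap` at step `s` over the label `ℓ`. -/
noncomputable def fib (n : ℕ) (ω : Fin (n - 1) → Fin n × Fin n) (s ℓ : ℕ) : Finset (Fin n) :=
  Finset.univ.filter fun j => chainMap n ω s j = ℓ

lemma mem_fib {s ℓ : ℕ} {j : Fin n} : j ∈ fib n ω s ℓ ↔ chainMap n ω s j = ℓ := by
  simp [fib]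

lemma fib_nonempty (hω : ValidSeq n ω) {s ℓ : ℕ} (hs : s ≤ n - 1) (hℓ : ℓ < n - s) :
    (fib n ω s ℓ).Nonempty := by
  obtain ⟨i, hi⟩ := chainMap_surj hω hs ℓ hℓ
  exact ⟨i, mem_fib.mpr hi⟩

lemma fib_label_eq {s ℓ ℓ' : ℕ} (hne : (fib n ω s ℓ).Nonempty)
    (h : fib n ω s ℓ = fib n ω s ℓ') : ℓ = ℓ' := by
  obtain ⟨j, hj⟩ := hne
  have h1 := mem_fib.mp hj
  have h2 := mem_fib.mp (h ▸ hj)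
  omega

lemma fib_subset {t ℓ m : ℕ} (h : t + m ≤ n - 1) :
    fib n ω t ℓ ⊆ fib n ω (t + m) (trc n ω t ℓ m) := by
  intro j hj
  rw [mem_fib] at hj ⊢
  rw [chainMap_add j h, hj]

lemma fib_supset_of_srv (hω : ValidSeq n ω) {t ℓ : ℕ} : ∀ {m : ℕ}, t + m ≤ n - 1 →
    srv n ω t ℓ m → fib n ω (t + m) (trc n ω t ℓ m) ⊆ fib n ω t ℓ := by
  intro m
  induction m with
  | zero => intro _ _ j hj; exact hj
  | succ m ih =>
      intro hm hs j hj
      have hm' : t + m < n - 1 := by omega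
      obtain ⟨h1, _⟩ := pr_lt hω hm'
      rw [mem_fib] at hj
      rw [show t + (m + 1) = (t + m) + 1 by ring, chainMap_succ hm'] at hj
      have hstep := (srv_succ.mp hs).2
      have : chainMap n ω (t + m) j = trc n ω t ℓ m :=
        collapse_inj h1 hstep.1 hstep.2 hj
      exact ih (by omega) (srv_mono (by omega) hs) (mem_fib.mpr this)

lemma fib_ne_of_not_srv (hω : ValidSeq n ω) {t ℓ m : ℕ} (hm : t + m ≤ n - 1)
    (hℓ : ℓ < n - t) (hns : ¬ srv n ω t ℓ m) :
    fib n ω (t + m) (trc n ω t ℓ m) ≠ fib n ω t ℓ := by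
  simp only [srv, not_forall] at hns
  obtain ⟨r, hr, hhit⟩ := hns
  rw [not_and_or, not_ne_iff, not_ne_iff] at hhit
  have hr' : t + r < n - 1 := by omega
  obtain ⟨h1, h2⟩ := pr_lt hω hr'
  -- the partner label merged with `trc r`
  set c : ℕ := if trc n ω t ℓ r = pr1 n ω (t + r) then pr2 n ω (t + r) else pr1 n ω (t + r)
    with hc
  have hcval : (trc n ω t ℓ r = pr1 n ω (t + r) ∧ c = pr2 n ω (t + r)) ∨
      (trc n ω t ℓ r = pr2 n ω (t + r) ∧ c = pr1 n ω (t + r)) := by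
    rcases hhit with h | h
    · exact Or.inl ⟨h, by rw [hc, if_pos h]⟩
    · exact Or.inr ⟨h, by rw [hc, if_neg (by omega)]⟩
  have hcne : c ≠ trc n ω t ℓ r := by rcases hcval with ⟨h, h'⟩ | ⟨h, h'⟩ <;> omega
  have hclt : c < n - (t + r) := by rcases hcval with ⟨h, h'⟩ | ⟨h, h'⟩ <;> omega
  obtain ⟨j, hj⟩ := chainMap_surj hω (le_of_lt hr') c hclt
  have hcol : collapse (pr1 n ω (t + r)) (pr2 n ω (t + r)) c
      = collapse (pr1 n ω (t + r)) (pr2 n ω (t + r)) (trc n ω t ℓ r) := by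
    rcases hcval with ⟨h, h'⟩ | ⟨h, h'⟩ <;>
      rw [h, h'] <;> simp [collapse_left h1, collapse_right h1]
  have hj1 : chainMap n ω (t + r + 1) j = trc n ω t ℓ (r + 1) := by
    rw [chainMap_succ hr', hj, hcol]; rfl
  obtain ⟨q, rfl⟩ : ∃ q, m = (r + 1) + q := ⟨m - (r + 1), by omega⟩
  have hjm : chainMap n ω (t + ((r + 1) + q)) j = trc n ω t ℓ ((r + 1) + q) := by
    rw [show t + ((r + 1) + q) = (t + (r + 1)) + q by ring,
      chainMap_add j (by omega), show t + (r+1) = t + r + 1 by ring, hj1,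
      ← show t + (r+1) = t + r + 1 by ring, ← trc_add]
  intro heq
  have hjfib : j ∈ fib n ω t ℓ := heq ▸ mem_fib.mpr hjm
  have : chainMap n ω (t + r) j = trc n ω t ℓ r :=
    mem_fib.mp (fib_subset (by omega) hjfib)
  rw [hj] at this
  exact hcne this

/-- Characterisation of the blocks at `k` lineages. -/
lemma mem_blocksAt (hω : ValidSeq n ω) {k : ℕ} (hk : 1 ≤ k) (hk' : k ≤ n)
    {B : Finset (Fin n)} :
    B ∈ blocksAt n ω k ↔ ∃ ℓ < k, B = fib n ω (n - k) ℓ := by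
  have hnk : n - k ≤ n - 1 := by omega
  have hkk : n - (n - k) = k := by omega
  constructor
  · intro hB
    obtain ⟨i, _, rfl⟩ := Finset.mem_image.mp hB
    refine ⟨chainMap n ω (n - k) i, ?_, ?_⟩
    · have := chainMap_lt hω hnk i; omega
    · rfl
  · rintro ⟨ℓ, hℓ, rfl⟩
    obtain ⟨i, hi⟩ := chainMap_surj hω hnk ℓ (by omega)
    refine Finset.mem_image.mpr ⟨i, Finset.mem_univ _, ?_⟩
    unfold blockOf fib
    rw [hi]

/-- The F-matrix counts surviving labels. -/
lemma FmatOf_eq_card (hω : ValidSeq n ω) {i j : ℕ} (hn : 2 ≤ n) (hj : 1 ≤ j)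
    (hji : j ≤ i) (hi : i ≤ n - 1) :
    FmatOf n ω i j
      = ((Finset.range (i + 1)).filter fun ℓ => srv n ω (n - i - 1) ℓ (i - j)).card := by
  set t := n - i - 1 with ht
  set m := i - j with hm
  have htm : t + m = n - j - 1 := by omega
  have htm' : t + m ≤ n - 1 := by omega
  have hnt : n - t = i + 1 := by omega
  have hntm : n - (t + m) = j + 1 := by omega
  have key : blocksAt n ω (j + 1) ∩ blocksAt n ω (i + 1)
      = ((Finset.range (i + 1)).filter fun ℓ => srv n ω t ℓ m).image (fib n ω t) := by
    ext B
    simp only [Finset.mem_inter, Finset.mem_image, Finset.mem_filter, Finset.mem_range]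
    constructor
    · rintro ⟨hBj, hBi⟩
      obtain ⟨ℓ, hℓ, rfl⟩ := (mem_blocksAt hω (by omega) (by omega)).mp hBi
      rw [show n - (i + 1) = t by omega] at *
      obtain ⟨ℓ', hℓ', hB'⟩ := (mem_blocksAt hω (by omega) (by omega)).mp hBj
      rw [show n - (j + 1) = t + m by omega] at hB'
      refine ⟨ℓ, ⟨hℓ, ?_⟩, rfl⟩
      by_contra hns
      obtain ⟨j₀, hj₀⟩ := fib_nonempty hω (by omega) (show ℓ' < n - (t + m) by omega)
      have hj₀t : j₀ ∈ fib n ω t ℓ := by rw [hB']; exact hj₀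
      have hj₀m : j₀ ∈ fib n ω (t + m) (trc n ω t ℓ m) := fib_subset htm' hj₀t
      have : ℓ' = trc n ω t ℓ m := by
        have e1 := mem_fib.mp hj₀
        have e2 := mem_fib.mp hj₀m
        omega
      subst this
      exact fib_ne_of_not_srv hω htm' (by omega) hns (hB' ▸ rfl)
    · rintro ⟨ℓ, ⟨hℓ, hs⟩, rfl⟩
      have heq : fib n ω t ℓ = fib n ω (t + m) (trc n ω t ℓ m) :=
        le_antisymm (fib_subset htm') (fib_supset_of_srv hω htm' hs)
      constructor
      · rw [mem_blocksAt hω (by omega) (by omega), show n - (j+1) = t + m by omega]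
        exact ⟨trc n ω t ℓ m, by have := trc_lt hω (show ℓ < n - t by omega) htm'; omega, heq⟩
      · rw [mem_blocksAt hω (by omega) (by omega), show n - (i+1) = t by omega]
        exact ⟨ℓ, hℓ, rfl⟩
  rw [FmatOf, key, Finset.card_image_of_injOn]
  intro ℓ hℓ ℓ' hℓ' hff
  simp only [Finset.coe_filter, Finset.mem_range, Set.mem_setOf_eq] at hℓ hℓ'
  exact fib_label_eq (fib_nonempty hω (by omega) (show ℓ < n - t by omega)) hff

end YuleAux
namespace YuleAux

/-- The set of admissible merge pairs among `m` lineages. -/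
noncomputable def pairSet (n m : ℕ) : Finset (Fin n × Fin n) :=
  Finset.univ.filter fun p => (p.1 : ℕ) < (p.2 : ℕ) ∧ (p.2 : ℕ) < m

lemma mem_pairSet {n m : ℕ} {p : Fin n × Fin n} :
    p ∈ pairSet n m ↔ (p.1 : ℕ) < (p.2 : ℕ) ∧ (p.2 : ℕ) < m := by
  simp [pairSet]

lemma card_pairSet {n m : ℕ} (hn : 0 < n) (hm : m ≤ n) :
    (pairSet n m).card = m.choose 2 := by
  rw [Finset.card_eq_sum_card_fiberwise
    (f := fun p : Fin n × Fin n => (p.2 : ℕ)) (t := Finset.range m)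
    (fun p hp => Finset.mem_range.mpr (mem_pairSet.mp hp).2)]
  have hfib : ∀ b ∈ Finset.range m,
      ((pairSet n m).filter fun p => (p.2 : ℕ) = b).card = b := by
    intro b hb
    rw [Finset.mem_range] at hb
    have key : ((pairSet n m).filter fun p => (p.2 : ℕ) = b).card
        = (Finset.range b).card := by
      refine Finset.card_nbij' (fun p => (p.1 : ℕ))
        (fun k => ((⟨k % n, Nat.mod_lt _ hn⟩ : Fin n), (⟨b % n, Nat.mod_lt _ hn⟩ : Fin n)))
        ?_ ?_ ?_ ?_
      · intro p hp
        simp only [Finset.mem_coe, Finset.mem_filter, mem_pairSet] at hp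
        simp only [Finset.mem_coe, Finset.mem_range]; omega
      · intro k hk
        rw [Finset.mem_coe, Finset.mem_range] at hk
        have hkn : k % n = k := Nat.mod_eq_of_lt (by omega)
        have hbn : b % n = b := Nat.mod_eq_of_lt (by omega)
        simp only [Finset.mem_coe, Finset.mem_filter, mem_pairSet, hkn, hbn]
        exact ⟨⟨by omega, by omega⟩, by trivial⟩
      · intro p hp
        simp only [Finset.mem_coe, Finset.mem_filter, mem_pairSet] at hp
        have h1 : (p.1 : ℕ) % n = (p.1 : ℕ) := Nat.mod_eq_of_lt p.1.isLt
        have hbn : b % n = b := Nat.mod_eq_of_lt (by omega)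
        rw [Prod.ext_iff]
        constructor <;> apply Fin.ext <;> simp only [Fin.val_mk, h1, hbn] <;> omega
      · intro k hk
        rw [Finset.mem_coe, Finset.mem_range] at hk
        simp [Nat.mod_eq_of_lt (show k < n by omega)]
    rw [key, Finset.card_range]
  rw [Finset.sum_congr rfl hfib]
  have h2 := Finset.sum_range_id_mul_two m
  have h3 : m.choose 2 = m * (m - 1) / 2 := Nat.choose_two_right m
  omega

lemma card_pairSet_avoid {n m ℓ : ℕ} (hn : 0 < n) (hm : m ≤ n) (hℓ : ℓ < m) :
    ((pairSet n m).filter fun p => (p.1 : ℕ) ≠ ℓ ∧ (p.2 : ℕ) ≠ ℓ).card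
      = (m - 1).choose 2 := by
  rw [← card_pairSet hn (show m - 1 ≤ n by omega)]
  symm
  refine Finset.card_nbij'
    (fun p : Fin n × Fin n =>
      ((if h : (p.1 : ℕ) + 1 < n ∧ ℓ ≤ (p.1 : ℕ) then (⟨(p.1 : ℕ) + 1, h.1⟩ : Fin n) else p.1),
       (if h : (p.2 : ℕ) + 1 < n ∧ ℓ ≤ (p.2 : ℕ) then (⟨(p.2 : ℕ) + 1, h.1⟩ : Fin n) else p.2)))
    (fun p : Fin n × Fin n =>
      ((⟨if ℓ < (p.1 : ℕ) then (p.1 : ℕ) - 1 else (p.1 : ℕ), by have := p.1.isLt; split_ifs <;> omega⟩ : Fin n),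
       (⟨if ℓ < (p.2 : ℕ) then (p.2 : ℕ) - 1 else (p.2 : ℕ), by have := p.2.isLt; split_ifs <;> omega⟩ : Fin n)))
    ?_ ?_ ?_ ?_
  · intro p hp
    rw [Finset.mem_coe, mem_pairSet] at hp
    have i1 := p.1.isLt; have i2 := p.2.isLt
    simp only [Finset.mem_coe, Finset.mem_filter, mem_pairSet]
    refine ⟨⟨?_, ?_⟩, ?_, ?_⟩ <;> split_ifs <;> (try simp only [Fin.val_mk] at *) <;> omega
  · intro p hp
    simp only [Finset.mem_coe, Finset.mem_filter, mem_pairSet] at hp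
    rw [Finset.mem_coe, mem_pairSet]
    (try dsimp only [Fin.val_mk])
    constructor <;> split_ifs <;> omega
  · intro p hp
    rw [Finset.mem_coe, mem_pairSet] at hp
    rw [Prod.ext_iff]
    constructor <;> apply Fin.ext <;> (try dsimp only [Fin.val_mk]) <;> split_ifs <;>
      (try simp only [Fin.val_mk] at *) <;> omega
  · intro p hp
    simp only [Finset.mem_coe, Finset.mem_filter, mem_pairSet] at hp
    have i1 := p.1.isLt; have i2 := p.2.isLt
    rw [Prod.ext_iff]
    constructor <;> apply Fin.ext <;> (try dsimp only [Fin.val_mk]) <;> split_ifs <;>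
      (try simp only [Fin.val_mk] at *) <;> omega

end YuleAux
namespace YuleAux

variable {n : ℕ} {ω ω' : Fin (n - 1) → Fin n × Fin n}

lemma pr1_congr {s : ℕ} (h : ∀ u : Fin (n - 1), (u : ℕ) = s → ω u = ω' u) :
    pr1 n ω s = pr1 n ω' s := by
  unfold pr1; split_ifs with hs
  · rw [h ⟨s, hs⟩ rfl]
  · rfl

lemma pr2_congr {s : ℕ} (h : ∀ u : Fin (n - 1), (u : ℕ) = s → ω u = ω' u) :
    pr2 n ω s = pr2 n ω' s := by
  unfold pr2; split_ifs with hs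
  · rw [h ⟨s, hs⟩ rfl]
  · rfl

lemma trc_congr {t ℓ : ℕ} : ∀ {r : ℕ}, (∀ u : Fin (n - 1), (u : ℕ) < t + r → ω u = ω' u) →
    trc n ω t ℓ r = trc n ω' t ℓ r := by
  intro r
  induction r with
  | zero => intro _; rfl
  | succ r ih =>
      intro h
      show collapse _ _ _ = collapse _ _ _
      rw [ih (fun u hu => h u (by omega)),
        pr1_congr (fun u hu => h u (by omega)),
        pr2_congr (fun u hu => h u (by omega))]

lemma srv_congr {t ℓ m : ℕ} (h : ∀ u : Fin (n - 1), (u : ℕ) < t + m → ω u = ω' u) :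
    srv n ω t ℓ m ↔ srv n ω' t ℓ m := by
  have key : ∀ r < m, trc n ω t ℓ r = trc n ω' t ℓ r ∧
      pr1 n ω (t + r) = pr1 n ω' (t + r) ∧ pr2 n ω (t + r) = pr2 n ω' (t + r) :=
    fun r hr => ⟨trc_congr (fun u hu => h u (by omega)),
      pr1_congr (fun u hu => h u (by omega)), pr2_congr (fun u hu => h u (by omega))⟩
  constructor
  · intro hs r hr
    obtain ⟨e1, e2, e3⟩ := key r hr
    rw [← e1, ← e2, ← e3]; exact hs r hr
  · intro hs r hr
    obtain ⟨e1, e2, e3⟩ := key r hr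
    rw [e1, e2, e3]; exact hs r hr

lemma mem_coalSpace : ω ∈ coalSpace n ↔ ValidSeq n ω := by simp [coalSpace]

lemma validSeq_update (hω : ValidSeq n ω) {s0 : Fin (n - 1)} {p : Fin n × Fin n}
    (hp : (p.1 : ℕ) < (p.2 : ℕ) ∧ (p.2 : ℕ) < n - (s0 : ℕ)) :
    ValidSeq n (Function.update ω s0 p) := by
  intro s
  rcases eq_or_ne s s0 with rfl | hne
  · simpa [Function.update_self] using hp
  · simpa [Function.update_of_ne hne] using hω s

/-- Valid sequences where label `ℓ` (at step `t`) survives `r` steps. -/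
noncomputable def Aset (n t ℓ r : ℕ) : Finset (Fin (n - 1) → Fin n × Fin n) :=
  (coalSpace n).filter fun ω => srv n ω t ℓ r

lemma mem_Aset {t ℓ r : ℕ} : ω ∈ Aset n t ℓ r ↔ ValidSeq n ω ∧ srv n ω t ℓ r := by
  simp [Aset, mem_coalSpace.symm, Finset.mem_filter]

lemma Aset_step (hn : 2 ≤ n) {t ℓ r : ℕ} (hℓ : ℓ < n - t) (hr : t + r < n - 1) :
    (Aset n t ℓ (r + 1)).card * (n - (t + r)).choose 2
      = (Aset n t ℓ r).card * (n - (t + r) - 1).choose 2 := by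
  have hge2 : 2 ≤ n - (t + r) := by omega
  set s0 : Fin (n - 1) := ⟨t + r, hr⟩ with hs0
  set p₀ : Fin n × Fin n := (⟨0, by omega⟩, ⟨1, by omega⟩) with hp₀def
  have hp₀ : (p₀.1 : ℕ) < (p₀.2 : ℕ) ∧ (p₀.2 : ℕ) < n - (t + r) := by
    simp [hp₀def]; omega
  have hupd_agree : ∀ (ω : Fin (n - 1) → Fin n × Fin n) (p : Fin n × Fin n),
      ∀ u : Fin (n - 1), (u : ℕ) < t + r → Function.update ω s0 p u = ω u := by
    intro ω p u hu
    apply Function.update_of_ne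
    intro he; rw [he] at hu; simp [hs0] at hu
  have hpr_upd : ∀ (ω : Fin (n - 1) → Fin n × Fin n) (p : Fin n × Fin n),
      pr1 n (Function.update ω s0 p) (t + r) = (p.1 : ℕ) ∧
      pr2 n (Function.update ω s0 p) (t + r) = (p.2 : ℕ) := by
    intro ω p
    have e : Function.update ω s0 p s0 = p := Function.update_self _ _ _
    constructor
    · unfold pr1
      rw [dif_pos hr]
      show ((Function.update ω s0 p s0).1 : ℕ) = _
      rw [e]
    · unfold pr2
      rw [dif_pos hr]
      show ((Function.update ω s0 p s0).2 : ℕ) = _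
      rw [e]
  -- updating coordinate `s0` preserves membership in `Aset n t ℓ r`
  have hfact : ∀ ω ∈ Aset n t ℓ r, ∀ p ∈ pairSet n (n - (t + r)),
      Function.update ω s0 p ∈ Aset n t ℓ r ∧
      trc n (Function.update ω s0 p) t ℓ r = trc n ω t ℓ r := by
    intro ω hω p hp
    rw [mem_Aset] at hω ⊢
    rw [mem_pairSet] at hp
    refine ⟨⟨validSeq_update hω.1 (by simpa [hs0] using hp), ?_⟩, ?_⟩
    · exact (srv_congr (hupd_agree ω p)).mpr hω.2
    · exact trc_congr (hupd_agree ω p)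
  have hmemps : ∀ ω ∈ Aset n t ℓ r, ω s0 ∈ pairSet n (n - (t + r)) := by
    intro ω hω
    rw [mem_pairSet]
    simpa [hs0] using (mem_Aset.mp hω).1 s0
  have hB : ∀ ω ∈ Aset n t ℓ r, Function.update ω s0 p₀ ∈
      (Aset n t ℓ r).filter fun ω => ω s0 = p₀ := by
    intro ω hω
    rw [Finset.mem_filter]
    exact ⟨(hfact ω hω p₀ (mem_pairSet.mpr hp₀)).1, Function.update_self _ _ _⟩
  set B := (Aset n t ℓ r).filter fun ω => ω s0 = p₀ with hBdef
  -- fibers of the map `ω ↦ update ω s0 p₀`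
  have fiber_eq : ∀ ω' ∈ B, ∀ ω, (Function.update ω s0 p₀ = ω') →
      (Function.update ω' s0 (ω s0) = ω) := by
    intro ω' _ ω hω
    rw [← hω, Function.update_idem, Function.update_eq_self]
  have claim1 : (Aset n t ℓ r).card = B.card * (n - (t + r)).choose 2 := by
    rw [Finset.card_eq_sum_card_fiberwise (f := fun ω => Function.update ω s0 p₀)
      (t := B) (fun ω hω => hB ω hω)]
    rw [Finset.sum_congr rfl (fun ω' hω' => ?_), Finset.sum_const, smul_eq_mul]
    have hω'A : ω' ∈ Aset n t ℓ r := (Finset.mem_filter.mp hω').1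
    have hω'0 : ω' s0 = p₀ := (Finset.mem_filter.mp hω').2
    rw [← card_pairSet (show 0 < n by omega) (show n - (t + r) ≤ n by omega)]
    refine Finset.card_nbij' (fun ω => ω s0) (fun p => Function.update ω' s0 p) ?_ ?_ ?_ ?_
    · intro ω hω
      exact hmemps ω (Finset.mem_filter.mp hω).1
    · intro p hp
      rw [Finset.mem_coe, Finset.mem_filter]
      refine ⟨(hfact ω' hω'A p hp).1, ?_⟩
      rw [Function.update_idem, ← hω'0, Function.update_eq_self]
    · intro ω hω
      exact fiber_eq ω' hω' ω (Finset.mem_filter.mp hω).2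
    · intro p _
      exact Function.update_self _ _ _
  have claim2 : (Aset n t ℓ (r + 1)).card = B.card * (n - (t + r) - 1).choose 2 := by
    have hsub : ∀ ω, ω ∈ Aset n t ℓ (r + 1) → ω ∈ Aset n t ℓ r := by
      intro ω hω
      rw [mem_Aset] at hω ⊢
      exact ⟨hω.1, srv_mono (by omega) hω.2⟩
    rw [Finset.card_eq_sum_card_fiberwise (f := fun ω => Function.update ω s0 p₀)
      (t := B) (fun ω hω => hB ω (hsub ω hω))]
    rw [Finset.sum_congr rfl (fun ω' hω' => ?_), Finset.sum_const, smul_eq_mul]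
    have hω'A : ω' ∈ Aset n t ℓ r := (Finset.mem_filter.mp hω').1
    have hω'0 : ω' s0 = p₀ := (Finset.mem_filter.mp hω').2
    have hω'v : ValidSeq n ω' := (mem_Aset.mp hω'A).1
    have htrc : trc n ω' t ℓ r < n - (t + r) := trc_lt hω'v hℓ (by omega)
    rw [show (n - (t + r) - 1) = (n - (t + r)) - 1 from rfl,
      ← card_pairSet_avoid (ℓ := trc n ω' t ℓ r) (show 0 < n by omega)
        (show n - (t + r) ≤ n by omega) htrc]
    refine Finset.card_nbij' (fun ω => ω s0) (fun p => Function.update ω' s0 p) ?_ ?_ ?_ ?_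
    · intro ω hω
      rw [Finset.mem_coe, Finset.mem_filter] at hω
      obtain ⟨hωA, hωf⟩ := hω
      have hωr : ω ∈ Aset n t ℓ r := hsub ω hωA
      rw [Finset.mem_coe, Finset.mem_filter]
      refine ⟨hmemps ω hωr, ?_⟩
      have hsrv := (mem_Aset.mp hωA).2
      have hstep := (srv_succ.mp hsrv).2
      have htr : trc n ω' t ℓ r = trc n ω t ℓ r := by
        rw [← hωf]
        exact trc_congr (hupd_agree ω p₀)
      obtain ⟨e1, e2⟩ := hpr_upd ω (ω s0)
      have hωs : Function.update ω s0 (ω s0) = ω := Function.update_eq_self _ _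
      rw [hωs] at e1 e2
      rw [htr]
      exact ⟨fun h => hstep.1 (by rw [← e1] at h; exact h.symm ▸ rfl),
             fun h => hstep.2 (by rw [← e2] at h; exact h.symm ▸ rfl)⟩
    · intro p hp
      rw [Finset.mem_coe, Finset.mem_filter] at hp
      obtain ⟨hpps, hp1, hp2⟩ := hp
      rw [Finset.mem_coe, Finset.mem_filter]
      obtain ⟨hupdA, hupdtrc⟩ := hfact ω' hω'A p hpps
      constructor
      · rw [mem_Aset] at hupdA ⊢
        refine ⟨hupdA.1, srv_succ.mpr ⟨hupdA.2, ?_⟩⟩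
        obtain ⟨e1, e2⟩ := hpr_upd ω' p
        rw [e1, e2, hupdtrc]
        exact ⟨fun h => hp1 h.symm, fun h => hp2 h.symm⟩
      · rw [Function.update_idem, ← hω'0, Function.update_eq_self]
    · intro ω hω
      exact fiber_eq ω' hω' ω (Finset.mem_filter.mp hω).2
    · intro p _
      exact Function.update_self _ _ _
  calc (Aset n t ℓ (r + 1)).card * (n - (t + r)).choose 2
      = (B.card * (n - (t + r)).choose 2) * (n - (t + r) - 1).choose 2 := by
        rw [claim2]; ring
    _ = (Aset n t ℓ r).card * (n - (t + r) - 1).choose 2 := by rw [← claim1]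

lemma Aset_card (hn : 2 ≤ n) {t ℓ : ℕ} (hℓ : ℓ < n - t) : ∀ {m : ℕ}, t + m ≤ n - 1 →
    (Aset n t ℓ m).card * ∏ r ∈ Finset.range m, (n - (t + r)).choose 2
      = (coalSpace n).card * ∏ r ∈ Finset.range m, (n - (t + r) - 1).choose 2 := by
  intro m
  induction m with
  | zero =>
      intro _
      simp only [Finset.range_zero, Finset.prod_empty, mul_one]
      congr 1
      apply Finset.filter_true_of_mem
      intro ω _
      exact srv_zero
  | succ m ih =>
      intro hm
      have hstep := Aset_step hn hℓ (show t + m < n - 1 by omega)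
      rw [Finset.prod_range_succ, Finset.prod_range_succ]
      calc (Aset n t ℓ (m + 1)).card *
            ((∏ r ∈ Finset.range m, (n - (t + r)).choose 2) * (n - (t + m)).choose 2)
          = ((Aset n t ℓ (m + 1)).card * (n - (t + m)).choose 2) *
            ∏ r ∈ Finset.range m, (n - (t + r)).choose 2 := by ring
        _ = ((Aset n t ℓ m).card * (n - (t + m) - 1).choose 2) *
            ∏ r ∈ Finset.range m, (n - (t + r)).choose 2 := by rw [hstep]
        _ = ((Aset n t ℓ m).card * ∏ r ∈ Finset.range m, (n - (t + r)).choose 2) *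
            (n - (t + m) - 1).choose 2 := by ring
        _ = ((coalSpace n).card * ∏ r ∈ Finset.range m, (n - (t + r) - 1).choose 2) *
            (n - (t + m) - 1).choose 2 := by rw [ih (by omega)]
        _ = (coalSpace n).card *
            ((∏ r ∈ Finset.range m, (n - (t + r) - 1).choose 2) * (n - (t + m) - 1).choose 2) := by
              ring

lemma coalSpace_card_pos (hn : 2 ≤ n) : 0 < (coalSpace n).card := by
  rw [Finset.card_pos]
  refine ⟨fun _ => (⟨0, by omega⟩, ⟨1, by omega⟩), mem_coalSpace.mpr ?_⟩
  intro s
  have := s.isLt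
  constructor
  · simp
  · simp; omega

end YuleAux

open YuleAux in
/-- Under the Yule (Kingman coalescent) distribution on ranked
tree shapes with `n` leaves, `E[F_{ij}] = j(j+1)/i` for `1 ≤ j ≤ i ≤ n-1`. -/
theorem yule_fmat_expectation (n i j : ℕ) (hn : 2 ≤ n)
    (hj : 1 ≤ j) (hji : j ≤ i) (hi : i ≤ n - 1) :
    coalE n (fun ω => (FmatOf n ω i j : ℝ)) = (j : ℝ) * ((j : ℝ) + 1) / (i : ℝ) := by
  set t := n - i - 1 with ht
  set m := i - j with hm
  have htm : t + m ≤ n - 1 := by omega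
  have hnt : n - t = i + 1 := by omega
  -- the sum of F over the sample space, as a sum of survival counts
  have hsum : ∑ ω ∈ coalSpace n, FmatOf n ω i j
      = ∑ ℓ ∈ Finset.range (i + 1), (Aset n t ℓ m).card := by
    rw [Finset.sum_congr rfl
      (fun ω hω => FmatOf_eq_card (mem_coalSpace.mp hω) hn hj hji hi)]
    rw [Finset.sum_congr rfl
      (fun ω _ => Finset.card_filter (fun ℓ => srv n ω t ℓ m) (Finset.range (i + 1))),
      Finset.sum_comm]
    refine Finset.sum_congr rfl fun ℓ _ => ?_
    rw [Aset, Finset.card_filter]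
  -- the counting products
  set Pn : ℕ := ∏ r ∈ Finset.range m, (n - (t + r)).choose 2 with hPdef
  set Qn : ℕ := ∏ r ∈ Finset.range m, (n - (t + r) - 1).choose 2 with hQdef
  have hPpos : 0 < Pn := Finset.prod_pos fun r hr =>
    Nat.choose_pos (by rw [Finset.mem_range] at hr; omega)
  have hApQ : ∀ ℓ ∈ Finset.range (i + 1), (Aset n t ℓ m).card * Pn
      = (coalSpace n).card * Qn := by
    intro ℓ hℓ
    rw [Finset.mem_range] at hℓ
    exact Aset_card hn (by omega) htm
  -- the telescoping identity
  have htel : Qn * ((i + 1).choose 2) = Pn * ((j + 1).choose 2) := by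
    have hP' : Pn = ∏ r ∈ Finset.range m, (i + 1 - r).choose 2 :=
      Finset.prod_congr rfl fun r hr => by
        rw [Finset.mem_range] at hr; congr 1; omega
    have hQ' : Qn = ∏ r ∈ Finset.range m, (i + 1 - (r + 1)).choose 2 :=
      Finset.prod_congr rfl fun r hr => by
        rw [Finset.mem_range] at hr; congr 1; omega
    have h1 := Finset.prod_range_succ (fun r => (i + 1 - r).choose 2) m
    have h2 := Finset.prod_range_succ' (fun r => (i + 1 - r).choose 2) m
    rw [hP', hQ']
    have : (∏ r ∈ Finset.range m, (i + 1 - (r + 1)).choose 2) * (i + 1 - 0).choose 2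
        = (∏ r ∈ Finset.range m, (i + 1 - r).choose 2) * (i + 1 - m).choose 2 := by
      rw [← h1, ← h2]
    rw [show i + 1 - m = j + 1 by omega] at this
    simpa using this
  -- positivity
  have hCpos : 0 < (coalSpace n).card := coalSpace_card_pos hn
  have hC : ((coalSpace n).card : ℝ) ≠ 0 := by positivity
  have hP : (Pn : ℝ) ≠ 0 := by positivity
  have hi0 : (i : ℝ) ≠ 0 := by
    have : 0 < i := by omega
    positivity
  -- compute the expectation
  have hE : coalE n (fun ω => (FmatOf n ω i j : ℝ))
      = ((i : ℝ) + 1) * ((Qn : ℝ) / (Pn : ℝ)) := by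
    rw [coalE]
    rw [show ∑ ω ∈ coalSpace n, ((FmatOf n ω i j : ℕ) : ℝ)
        = ((∑ ω ∈ coalSpace n, FmatOf n ω i j : ℕ) : ℝ) from (Nat.cast_sum _ _).symm]
    rw [hsum]
    push_cast
    rw [Finset.sum_congr rfl (fun ℓ hℓ => show ((Aset n t ℓ m).card : ℝ)
        = ((coalSpace n).card : ℝ) * Qn / Pn from by
      have := hApQ ℓ hℓ
      have hcast : ((Aset n t ℓ m).card : ℝ) * Pn = ((coalSpace n).card : ℝ) * Qn := by
        exact_mod_cast congrArg (Nat.cast : ℕ → ℝ) this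
      field_simp at hcast ⊢
      linarith [hcast])]
    rw [Finset.sum_const, Finset.card_range, nsmul_eq_mul]
    push_cast
    field_simp
  rw [hE]
  -- final arithmetic
  have c2 : ∀ k : ℕ, (k + 1).choose 2 * 2 = (k + 1) * k := by
    intro k
    rw [Nat.choose_two_right, Nat.succ_sub_one]
    exact Nat.div_mul_cancel (Even.two_dvd (by
      simpa [mul_comm] using Nat.even_mul_succ_self k))
  have hN : Qn * ((i + 1) * i) = Pn * ((j + 1) * j) := by
    have := congrArg (· * 2) htel
    simp only [mul_assoc] at this
    rw [c2 i, c2 j] at this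
    exact this
  have hNr : (Qn : ℝ) * (((i : ℝ) + 1) * i) = (Pn : ℝ) * (((j : ℝ) + 1) * j) := by
    exact_mod_cast congrArg (Nat.cast : ℕ → ℝ) hN
  field_simp
  nlinarith [hNr]
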